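/- arXiv:2512.13615 — 10 statements merged into one kernel-verified Lean document; each statement's English description precedes it below -/
import Mathlib

section
/- Theorem 1 (hyper-minrank characterizes the optimal linear multi-sender broadcast length). Assume every message is stored at some sender, i.e. for every k ∈ Fin K there exists n ∈ Fin N with k ∈ 𝓜 n. Then the minimum length ℓ over all linear multi-sender index codes for the instance exists, the minimum of ∑_{n} rank_{𝔽₂}(A n) over all fitting tuples A exists, and the two minima are equal: the optimal linear broadcast length equals the hyper-minrank of the instance. -/
open Finset

/-- A tuple of matrices `A` (one per sender) *fits* the multi-sender index
coding instance given by storage sets `M` and side-information sets `R`. -/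
def Fits (K N : ℕ) (M : Fin N → Finset (Fin K)) (R : Fin K → Finset (Fin K))
    (A : Fin N → Matrix (Fin K) (Fin K) (ZMod 2)) : Prop :=
  (∀ n k k', A n k k' = 1 → k' ∈ M n) ∧
  (∀ k, ∑ n, A n k k = 1) ∧
  (∀ k k', k' ≠ k → k' ∉ R k → ∑ n, A n k k' = 0)

/-- A family of finite sets of transmission vectors `S n` (one per sender)
is a linear multi-sender index code for the instance. -/
def IsLinearCode (K N : ℕ) (M : Fin N → Finset (Fin K)) (R : Fin K → Finset (Fin K))
    (S : Fin N → Finset (Fin K → ZMod 2)) : Prop :=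
  (∀ n, ∀ u ∈ S n, ∀ m, u m ≠ 0 → m ∈ M n) ∧
  (∀ k, (Pi.single k 1 : Fin K → ZMod 2) ∈
    Submodule.span (ZMod 2)
      ((⋃ n, (S n : Set (Fin K → ZMod 2))) ∪ {v | ∃ j ∈ R k, v = Pi.single j 1}))

namespace HyperMinrankAux

open Submodule Module

lemma zmod2_eq_one {a : ZMod 2} (h : a ≠ 0) : a = 1 := by revert a; decide

variable {K N : ℕ} {M : Fin N → Finset (Fin K)} {R : Fin K → Finset (Fin K)}

/-- From a fitting tuple of matrices we extract a linear code whose length is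
exactly the sum of the ranks (choose a row basis of each matrix). -/
lemma code_of_fits (hR : ∀ k, k ∉ R k)
    {A : Fin N → Matrix (Fin K) (Fin K) (ZMod 2)} (hA : Fits K N M R A) :
    ∃ S : Fin N → Finset (Fin K → ZMod 2),
      IsLinearCode K N M R S ∧ ∑ n, (S n).card = ∑ n, (A n).rank := by
  classical
  obtain ⟨hsupp, hdiag, hoff⟩ := hA
  choose b hb1 hb2 hb3 using fun n => exists_linearIndependent (ZMod 2) (Set.range (A n))
  have hfin : ∀ n, (b n).Finite := fun n => (Set.finite_range (A n)).subset (hb1 n)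
  refine ⟨fun n => (hfin n).toFinset, ⟨?_, ?_⟩, ?_⟩
  · intro n u hu m hm
    have hu' : u ∈ b n := (hfin n).mem_toFinset.mp hu
    obtain ⟨k, rfl⟩ := hb1 n hu'
    exact hsupp n k m (zmod2_eq_one hm)
  · intro k
    set T : Set (Fin K → ZMod 2) :=
      (⋃ n, (((hfin n).toFinset : Finset (Fin K → ZMod 2)) : Set (Fin K → ZMod 2))) ∪
        {v | ∃ j ∈ R k, v = Pi.single j 1} with hT
    have hrow : ∀ n, (A n k) ∈ span (ZMod 2) T := by
      intro n
      have h1 : A n k ∈ span (ZMod 2) (Set.range (A n)) := subset_span ⟨k, rfl⟩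
      rw [← hb2 n] at h1
      refine span_mono ?_ h1
      intro x hx
      exact Or.inl (Set.mem_iUnion.mpr ⟨n, by simpa using (hfin n).mem_toFinset.mpr hx⟩)
    have hsingle : ∀ j ∈ R k, (Pi.single j 1 : Fin K → ZMod 2) ∈ span (ZMod 2) T :=
      fun j hj => subset_span (Or.inr ⟨j, hj, rfl⟩)
    have key : (Pi.single k 1 : Fin K → ZMod 2)
        = (∑ n, A n k) - ∑ j ∈ R k, (∑ n, A n k j) • (Pi.single j 1 : Fin K → ZMod 2) := by
      funext k'
      have hin : (∑ j ∈ R k, (∑ n, A n k j) • (Pi.single j 1 : Fin K → ZMod 2)) k'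
          = if k' ∈ R k then ∑ n, A n k k' else 0 := by
        rw [Finset.sum_apply]
        by_cases h : k' ∈ R k
        · rw [if_pos h, Finset.sum_eq_single_of_mem k' h]
          · simp
          · intro j hj hne
            have : (Pi.single j 1 : Fin K → ZMod 2) k' = 0 := Pi.single_eq_of_ne (Ne.symm hne) 1
            simp [this]
        · rw [if_neg h]
          refine Finset.sum_eq_zero fun j hj => ?_
          have hne : k' ≠ j := fun e => h (e ▸ hj)
          have : (Pi.single j 1 : Fin K → ZMod 2) k' = 0 := Pi.single_eq_of_ne hne 1
          simp [this]
      rw [Pi.sub_apply, Finset.sum_apply, hin]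
      by_cases hk : k' = k
      · subst hk
        rw [if_neg (hR k'), Pi.single_eq_same, hdiag k', sub_zero]
      · rw [Pi.single_eq_of_ne hk]
        by_cases h : k' ∈ R k
        · rw [if_pos h, sub_self]
        · rw [if_neg h, hoff k k' hk h, sub_zero]
    rw [key]
    exact sub_mem (sum_mem fun n _ => hrow n)
      (sum_mem fun j hj => smul_mem _ _ (hsingle j hj))
  · refine Finset.sum_congr rfl fun n _ => ?_
    haveI : Fintype (b n) := (hfin n).fintype
    rw [(A n).rank_eq_finrank_span_row]
    change _ = finrank (ZMod 2) (span (ZMod 2) (Set.range (A n)))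
    rw [← hb2 n, finrank_span_set_eq_card (hb3 n),
      Set.toFinset_card]
    exact (hfin n).card_toFinset

/-- From a linear code we extract a fitting tuple of matrices whose rank sum is
at most the code length. -/
lemma fits_of_code (hR : ∀ k, k ∉ R k)
    {S : Fin N → Finset (Fin K → ZMod 2)} (hS : IsLinearCode K N M R S) :
    ∃ A : Fin N → Matrix (Fin K) (Fin K) (ZMod 2),
      Fits K N M R A ∧ ∑ n, (A n).rank ≤ ∑ n, (S n).card := by
  classical
  obtain ⟨hsupp, hdec⟩ := hS
  choose c hc1 hc2 using fun k => mem_span_set.mp (hdec k)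
  set P : Fin N → (Fin K → ZMod 2) → Prop :=
    fun n u => u ∈ S n ∧ ∀ n', n' < n → u ∉ S n' with hP
  set A : Fin N → Matrix (Fin K) (Fin K) (ZMod 2) :=
    fun n k k' => ∑ u ∈ (c k).support.filter (fun u => P n u), (c k) u * u k' with hAdef
  -- partition identity
  have hpart : ∀ (k : Fin K) (f : (Fin K → ZMod 2) → ZMod 2),
      ∑ n, ∑ u ∈ (c k).support.filter (fun u => P n u), f u
        = ∑ u ∈ (c k).support.filter (fun u => ∃ n, u ∈ S n), f u := by
    intro k f
    rw [Finset.sum_filter]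
    have h1 : ∀ n : Fin N, ∑ u ∈ (c k).support.filter (fun u => P n u), f u
        = ∑ u ∈ (c k).support, if P n u then f u else 0 := fun n => Finset.sum_filter _ _
    simp only [h1]
    rw [Finset.sum_comm]
    refine Finset.sum_congr rfl fun u hu => ?_
    by_cases h : ∃ n, u ∈ S n
    · rw [if_pos h]
      obtain ⟨m, hm⟩ := h
      have hFne : (Finset.univ.filter (fun n => u ∈ S n)).Nonempty :=
        ⟨m, Finset.mem_filter.mpr ⟨Finset.mem_univ m, hm⟩⟩
      set n₀ := (Finset.univ.filter (fun n => u ∈ S n)).min' hFne with hn₀def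
      have hn₀ : u ∈ S n₀ :=
        (Finset.mem_filter.mp (Finset.min'_mem _ hFne)).2
      rw [Finset.sum_eq_single n₀]
      · rw [if_pos]
        exact ⟨hn₀, fun n' hlt hmem => absurd
          (Finset.min'_le _ n' (Finset.mem_filter.mpr ⟨Finset.mem_univ _, hmem⟩))
          (not_le.mpr hlt)⟩
      · intro n _ hne
        rw [if_neg]
        rintro ⟨hmem, hmin⟩
        have hle : n₀ ≤ n :=
          Finset.min'_le _ n (Finset.mem_filter.mpr ⟨Finset.mem_univ _, hmem⟩)
        exact hmin n₀ (lt_of_le_of_ne hle (Ne.symm hne)) hn₀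
      · intro hn; exact absurd (Finset.mem_univ n₀) hn
    · rw [if_neg h]
      exact Finset.sum_eq_zero fun n _ => if_neg (fun hp => h ⟨n, hp.1⟩)
  -- total sum identity
  have htotal : ∀ (k : Fin K) (k' : Fin K),
      ∑ u ∈ (c k).support, (c k) u * u k' = (Pi.single k 1 : Fin K → ZMod 2) k' := by
    intro k k'
    have := congrFun (hc2 k) k'
    rw [Finsupp.sum] at this
    rw [← this, Finset.sum_apply]
    simp
  -- the leftover (side-information) terms
  have hside : ∀ (k : Fin K) (u : Fin K → ZMod 2),
      u ∈ (c k).support.filter (fun u => ¬ ∃ n, u ∈ S n) →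
      ∃ j ∈ R k, u = Pi.single j 1 := by
    intro k u hu
    obtain ⟨hu1, hu2⟩ := Finset.mem_filter.mp hu
    rcases hc1 k hu1 with h | h
    · obtain ⟨s, ⟨n, rfl⟩, hs⟩ := h
      exact absurd ⟨n, hs⟩ hu2
    · exact h
  have hsplit : ∀ (k k' : Fin K),
      ∑ n, A n k k' = (Pi.single k 1 : Fin K → ZMod 2) k'
        - ∑ u ∈ (c k).support.filter (fun u => ¬ ∃ n, u ∈ S n), (c k) u * u k' := by
    intro k k'
    rw [hpart k (fun u => (c k) u * u k'), eq_sub_iff_add_eq,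
      Finset.sum_filter_add_sum_filter_not, htotal]
  refine ⟨A, ⟨?_, ?_, ?_⟩, ?_⟩
  · -- support condition
    intro n k k' h1
    by_contra hk'
    have : A n k k' = 0 := by
      refine Finset.sum_eq_zero fun u hu => ?_
      obtain ⟨hu1, hu2, _⟩ := Finset.mem_filter.mp hu
      have : u k' = 0 := by
        by_contra hne
        exact hk' (hsupp n u hu2 k' hne)
      simp [this]
    rw [this] at h1
    exact one_ne_zero h1.symm
  · -- demand parity
    intro k
    rw [hsplit k k]
    have hz : ∑ u ∈ (c k).support.filter (fun u => ¬ ∃ n, u ∈ S n), (c k) u * u k = 0 := by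
      refine Finset.sum_eq_zero fun u hu => ?_
      obtain ⟨j, hj, rfl⟩ := hside k u hu
      have hne : k ≠ j := fun e => hR k (e ▸ hj)
      rw [Pi.single_eq_of_ne hne, mul_zero]
    rw [hz, sub_zero, Pi.single_eq_same]
  · -- coupled parity
    intro k k' hne hnotin
    rw [hsplit k k']
    have hz : ∑ u ∈ (c k).support.filter (fun u => ¬ ∃ n, u ∈ S n), (c k) u * u k' = 0 := by
      refine Finset.sum_eq_zero fun u hu => ?_
      obtain ⟨j, hj, rfl⟩ := hside k u hu
      have hnej : k' ≠ j := fun e => hnotin (e ▸ hj)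
      rw [Pi.single_eq_of_ne hnej, mul_zero]
    rw [hz, Pi.single_eq_of_ne hne, sub_zero]
  · -- rank bound
    refine Finset.sum_le_sum fun n _ => ?_
    have hrow : ∀ k, A n k ∈ span (ZMod 2) ((S n : Finset (Fin K → ZMod 2)) : Set (Fin K → ZMod 2)) := by
      intro k
      have hAe : A n k = ∑ u ∈ (c k).support.filter (fun u => P n u), (c k) u • u := by
        funext k'
        rw [Finset.sum_apply]
        rfl
      rw [hAe]
      exact sum_mem fun u hu =>
        smul_mem _ _ (subset_span (Finset.mem_filter.mp hu).2.1)
    calc (A n).rank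
        = finrank (ZMod 2) (span (ZMod 2) (Set.range (A n))) :=
          (A n).rank_eq_finrank_span_row
      _ ≤ finrank (ZMod 2) (span (ZMod 2)
            ((S n : Finset (Fin K → ZMod 2)) : Set (Fin K → ZMod 2))) :=
          Submodule.finrank_mono (span_le.mpr (Set.range_subset_iff.mpr hrow))
      _ ≤ (S n).card := by
          simpa [Set.finrank] using finrank_span_finset_le_card (R := ZMod 2) (S n)

/-- Under the coverage assumption there is at least one linear code. -/
lemma code_exists (hcov : ∀ k : Fin K, ∃ n : Fin N, k ∈ M n) :
    ∃ S : Fin N → Finset (Fin K → ZMod 2), IsLinearCode K N M R S := by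
  classical
  choose nk hnk using hcov
  refine ⟨fun n => (Finset.univ.filter (fun k : Fin K => nk k = n)).image
    (fun k => Pi.single k 1), ?_, ?_⟩
  · intro n u hu m hm
    obtain ⟨k, hk, rfl⟩ := Finset.mem_image.mp hu
    obtain ⟨-, rfl⟩ := Finset.mem_filter.mp hk
    have : m = k := by
      by_contra hne
      exact hm (Pi.single_eq_of_ne hne 1)
    subst this
    exact hnk m
  · intro k
    refine Submodule.subset_span (Or.inl (Set.mem_iUnion.mpr ⟨nk k, ?_⟩))
    simp only [Finset.coe_image, Set.mem_image, Finset.mem_coe, Finset.mem_filter]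
    exact ⟨k, ⟨Finset.mem_univ k, rfl⟩, rfl⟩

end HyperMinrankAux

/-- Theorem 1: the optimal linear multi-sender broadcast length exists and
equals the hyper-minrank of the instance. -/
theorem hyperminrank_eq_optimal_linear_length
    (K N : ℕ) (M : Fin N → Finset (Fin K)) (R : Fin K → Finset (Fin K))
    (hR : ∀ k, k ∉ R k)
    (hcov : ∀ k : Fin K, ∃ n : Fin N, k ∈ M n) :
    ∃ ℓ : ℕ,
      IsLeast {l : ℕ | ∃ S : Fin N → Finset (Fin K → ZMod 2),
        IsLinearCode K N M R S ∧ ∑ n, (S n).card = l} ℓ ∧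
      IsLeast {r : ℕ | ∃ A : Fin N → Matrix (Fin K) (Fin K) (ZMod 2),
        Fits K N M R A ∧ ∑ n, (A n).rank = r} ℓ := by
  classical
  obtain ⟨S₀, hS₀⟩ := HyperMinrankAux.code_exists (R := R) hcov
  obtain ⟨A₀, hA₀, -⟩ := HyperMinrankAux.fits_of_code hR hS₀
  set RS : Set ℕ := {r : ℕ | ∃ A : Fin N → Matrix (Fin K) (Fin K) (ZMod 2),
    Fits K N M R A ∧ ∑ n, (A n).rank = r} with hRS
  have hne : RS.Nonempty := ⟨∑ n, (A₀ n).rank, by exact ⟨A₀, hA₀, rfl⟩⟩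
  obtain ⟨A₁, hA₁, hA₁r⟩ := Nat.sInf_mem hne
  obtain ⟨S₁, hS₁, hS₁c⟩ := HyperMinrankAux.code_of_fits hR hA₁
  refine ⟨sInf RS, ⟨⟨S₁, hS₁, by rw [hS₁c, hA₁r]⟩, ?_⟩,
    ⟨⟨A₁, hA₁, hA₁r⟩, fun r hr => Nat.sInf_le hr⟩⟩
  rintro l ⟨S, hS, rfl⟩
  obtain ⟨A, hA, hle⟩ := HyperMinrankAux.fits_of_code hR hS
  exact (Nat.sInf_le (show _ ∈ RS from ⟨A, hA, rfl⟩)).trans hle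
end

section
/- Achievability half of Theorem 1: for every fitting tuple A there exists a linear multi-sender index code of length ∑_{n} rank_{𝔽₂}(A n). Concretely, for each sender n one may take S_n to be a set of rank_{𝔽₂}(A n) rows of the matrix A n spanning its row space, and then for every receiver k the standard basis vector e_k lies in the 𝔽₂-linear span of (⋃_n S_n) ∪ {e_j : j ∈ 𝓡 k}. -/
open Finset

/-- Achievability half of Theorem 1: every fitting tuple `A` yields a linear
multi-sender index code of length `∑ n, rank (A n)`, obtained by letting each
sender `n` transmit a spanning set of `rank (A n)` rows of `A n`. -/
theorem achievability
    (K N : ℕ) (M : Fin N → Finset (Fin K)) (R : Fin K → Finset (Fin K))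
    (hR : ∀ k, k ∉ R k)
    (A : Fin N → Matrix (Fin K) (Fin K) (ZMod 2))
    (hA : Fits K N M R A) :
    ∃ S : Fin N → Finset (Fin K → ZMod 2),
      (∀ n, ∀ u ∈ S n, ∃ k : Fin K, u = A n k) ∧
      (∀ n, (S n).card = (A n).rank) ∧
      (∀ n, Submodule.span (ZMod 2) ((S n : Set (Fin K → ZMod 2))) =
        Submodule.span (ZMod 2) (Set.range (A n))) ∧
      IsLinearCode K N M R S ∧
      ∑ n, (S n).card = ∑ n, (A n).rank := by
  -- choose for each sender a linearly independent subset of rows spanning the row space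
  have hchoice : ∀ n : Fin N, ∃ b ⊆ Set.range (A n),
      Submodule.span (ZMod 2) b = Submodule.span (ZMod 2) (Set.range (A n)) ∧
      LinearIndependent (ZMod 2) ((↑) : b → (Fin K → ZMod 2)) :=
    fun n => exists_linearIndependent (ZMod 2) (Set.range (A n))
  choose b hb hspan hli using hchoice
  have hfin : ∀ n, (b n).Finite := fun n => (Set.finite_range (A n)).subset (hb n)
  set S : Fin N → Finset (Fin K → ZMod 2) := fun n => (hfin n).toFinset with hS
  have hScoe : ∀ n, (S n : Set (Fin K → ZMod 2)) = b n := fun n => (hfin n).coe_toFinset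
  have hrows : ∀ n, ∀ u ∈ S n, ∃ k : Fin K, u = A n k := by
    intro n u hu
    have : u ∈ b n := by rwa [← hScoe n, Finset.mem_coe]
    obtain ⟨k, hk⟩ := hb n this
    exact ⟨k, hk.symm⟩
  have hspanS : ∀ n, Submodule.span (ZMod 2) ((S n : Set (Fin K → ZMod 2))) =
      Submodule.span (ZMod 2) (Set.range (A n)) := by
    intro n; rw [hScoe n]; exact hspan n
  have hcard : ∀ n, (S n).card = (A n).rank := by
    intro n
    have : Fintype (b n) := (hfin n).fintype
    have h1 := finrank_span_set_eq_card (R := ZMod 2) (s := b n) (hli n)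
    have h2 : (S n).card = (b n).toFinset.card := by
      congr 1
      ext x
      rw [(hfin n).mem_toFinset, Set.mem_toFinset]
    rw [h2, ← h1, Matrix.rank_eq_finrank_span_row, hspan n]; rfl
  refine ⟨S, hrows, hcard, hspanS, ⟨?_, ?_⟩, Finset.sum_congr rfl fun n _ => hcard n⟩
  · -- support condition
    intro n u hu m hm
    obtain ⟨k, hk⟩ := hrows n u hu
    subst hk
    rcases (by decide : ∀ x : ZMod 2, x = 0 ∨ x = 1) (A n k m) with h | h
    · exact absurd h hm
    · exact hA.1 n k m h
  · -- decodability
    intro k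
    set T : Set (Fin K → ZMod 2) :=
      (⋃ n, (S n : Set (Fin K → ZMod 2))) ∪ {v | ∃ j ∈ R k, v = Pi.single j 1} with hT
    have hrow_mem : ∀ n, A n k ∈ Submodule.span (ZMod 2) T := by
      intro n
      have h1 : A n k ∈ Submodule.span (ZMod 2) (Set.range (A n)) :=
        Submodule.subset_span (Set.mem_range_self k)
      rw [← hspanS n] at h1
      refine Submodule.span_mono ?_ h1
      exact (Set.subset_iUnion (fun n => (S n : Set (Fin K → ZMod 2))) n).trans
        Set.subset_union_left
    have hsingle_mem : ∀ j ∈ R k, (Pi.single j 1 : Fin K → ZMod 2) ∈ Submodule.span (ZMod 2) T := by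
      intro j hj
      exact Submodule.subset_span (Set.mem_union_right _ ⟨j, hj, rfl⟩)
    have key : (Pi.single k 1 : Fin K → ZMod 2) =
        (∑ n, A n k) + ∑ j ∈ R k, ((∑ n, A n k) j) • (Pi.single j 1 : Fin K → ZMod 2) := by
      funext k'
      simp only [Pi.add_apply, Finset.sum_apply, Pi.smul_apply, smul_eq_mul]
      by_cases hk' : k' = k
      · subst hk'
        have h2 : ∀ j ∈ R k', (∑ n, A n k' j) * (Pi.single j 1 : Fin K → ZMod 2) k' = 0 := by
          intro j hj
          have hjk : j ≠ k' := fun h => hR k' (h ▸ hj)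
          rw [Pi.single_eq_of_ne (Ne.symm hjk), mul_zero]
        rw [Finset.sum_congr rfl h2, Finset.sum_const_zero, add_zero, Pi.single_eq_same, hA.2.1 k']
      · by_cases hk'R : k' ∈ R k
        · have h2 : ∀ j ∈ R k, (∑ n, A n k j) * (Pi.single j 1 : Fin K → ZMod 2) k' =
              if j = k' then (∑ n, A n k k') else 0 := by
            intro j hj
            by_cases hjk : j = k'
            · subst hjk; rw [Pi.single_eq_same, mul_one, if_pos rfl]
            · rw [Pi.single_eq_of_ne (fun h => hjk h.symm), mul_zero, if_neg hjk]
          rw [Finset.sum_congr rfl h2, Finset.sum_ite_eq' (R k) k' (fun _ => ∑ n, A n k k'),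
            if_pos hk'R, Pi.single_eq_of_ne hk']
          have : ∀ x : ZMod 2, x + x = 0 := by decide
          exact (this _).symm
        · have h2 : ∀ j ∈ R k, (∑ n, A n k j) * (Pi.single j 1 : Fin K → ZMod 2) k' = 0 := by
            intro j hj
            have hjk : j ≠ k' := fun h => hk'R (h ▸ hj)
            rw [Pi.single_eq_of_ne (Ne.symm hjk), mul_zero]
          rw [Finset.sum_congr rfl h2, Finset.sum_const_zero, add_zero,
            Pi.single_eq_of_ne hk', hA.2.2 k k' hk' hk'R]
    rw [key]
    exact Submodule.add_mem _ (Submodule.sum_mem _ fun n _ => hrow_mem n)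
      (Submodule.sum_mem _ fun j hj => Submodule.smul_mem _ _ (hsingle_mem j hj))
end

section
/- Converse half of Theorem 1: for every linear multi-sender index code (S_n)_{n ∈ Fin N} for the instance, there exists a fitting tuple A : Fin N → Matrix (Fin K) (Fin K) (ZMod 2) with ∑_{n} rank_{𝔽₂}(A n) ≤ ∑_{n} |S_n|. Consequently, the hyper-minrank of the instance is a lower bound on the length of every linear multi-sender index code. -/
open Finset

/-- Converse half of Theorem 1: every linear multi-sender index code induces a
fitting tuple of no larger total rank; hence the hyper-minrank lower-bounds the
length of every linear multi-sender index code. -/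
theorem converse
    (K N : ℕ) (M : Fin N → Finset (Fin K)) (R : Fin K → Finset (Fin K))
    (hR : ∀ k, k ∉ R k)
    (S : Fin N → Finset (Fin K → ZMod 2))
    (hS : IsLinearCode K N M R S) :
    (∃ A : Fin N → Matrix (Fin K) (Fin K) (ZMod 2),
      Fits K N M R A ∧ ∑ n, (A n).rank ≤ ∑ n, (S n).card) ∧
    sInf {r : ℕ | ∃ A : Fin N → Matrix (Fin K) (Fin K) (ZMod 2),
        Fits K N M R A ∧ ∑ n, (A n).rank = r} ≤ ∑ n, (S n).card := by
  classical
  obtain ⟨hsupp, hspan⟩ := hS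
  have hc : ∀ k, ∃ c : (Fin K → ZMod 2) →₀ ZMod 2,
      ↑c.support ⊆ ((⋃ n, (S n : Set (Fin K → ZMod 2))) ∪
        {v | ∃ j ∈ R k, v = Pi.single j 1}) ∧
      (c.sum fun v r => r • v) = Pi.single k 1 := fun k =>
    Submodule.mem_span_set.mp (hspan k)
  choose c hcsupp hcsum using hc
  rcases isEmpty_or_nonempty (Fin N) with hE | hNE
  · have hK : ∀ k : Fin K, False := by
      intro k
      have h := hspan k
      have hsub : ((⋃ n, (S n : Set (Fin K → ZMod 2))) ∪
          {v | ∃ j ∈ R k, v = Pi.single j 1}) ⊆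
          ↑(LinearMap.ker (LinearMap.proj k : (Fin K → ZMod 2) →ₗ[ZMod 2] ZMod 2)) := by
        rintro v (hv | ⟨j, hj, rfl⟩)
        · rcases Set.mem_iUnion.mp hv with ⟨n, _⟩
          exact (hE.elim n)
        · have hjk : j ≠ k := fun h => hR k (h ▸ hj)
          simp [LinearMap.mem_ker, Pi.single_eq_of_ne' hjk]
      have hmem := Submodule.span_le.mpr hsub h
      simp [LinearMap.mem_ker] at hmem
    have hfits0 : Fits K N M R (fun _ => 0) :=
      ⟨fun n => (hE.elim n), fun k => (hK k).elim, fun k k' _ _ => (hK k).elim⟩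
    have hz : ∑ n : Fin N, ((fun _ => (0 : Matrix (Fin K) (Fin K) (ZMod 2))) n).rank = 0 := by
      simp [Finset.univ_eq_empty]
    refine ⟨⟨fun _ => 0, hfits0, ?_⟩, ?_⟩
    · rw [hz]; exact Nat.zero_le _
    · exact le_trans (Nat.sInf_le ⟨fun _ => 0, hfits0, hz⟩) (Nat.zero_le _)
  set F : Finset (Fin K → ZMod 2) := Finset.univ.biUnion S with hFdef
  have hmemF : ∀ v, v ∈ F → ∃ n, v ∈ S n := fun v hv => by
    rcases Finset.mem_biUnion.mp hv with ⟨n, _, hn⟩; exact ⟨n, hn⟩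
  choose! n₀ hn₀ using hmemF
  set T : Fin N → Finset (Fin K → ZMod 2) := fun n => F.filter (fun v => n₀ v = n) with hTdef
  have hTS : ∀ n, T n ⊆ S n := by
    intro n v hv
    rcases Finset.mem_filter.mp hv with ⟨hvF, hvn⟩
    have := hn₀ v hvF
    rwa [hvn] at this
  set A : Fin N → Matrix (Fin K) (Fin K) (ZMod 2) :=
    fun n => Matrix.of (fun k k' => ∑ v ∈ T n, c k v * v k') with hAdef
  have key : ∀ k k', (∀ j ∈ R k, (Pi.single j (1:ZMod 2) : Fin K → ZMod 2) k' = 0) →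
      ∑ n, A n k k' = (Pi.single k 1 : Fin K → ZMod 2) k' := by
    intro k k' hside
    have h1 : ∑ n, A n k k' = ∑ v ∈ F, c k v * v k' := by
      simp only [hAdef, Matrix.of_apply, hTdef]
      exact Finset.sum_fiberwise F n₀ (fun v => c k v * v k')
    have h2 : ∑ v ∈ F, c k v * v k' = ∑ v ∈ (c k).support ∩ F, c k v * v k' := by
      refine (Finset.sum_subset Finset.inter_subset_right ?_).symm
      intro v hvF hv
      have hc0 : (c k) v = 0 := by
        by_contra h
        exact hv (Finset.mem_inter.mpr ⟨Finsupp.mem_support_iff.mpr h, hvF⟩)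
      simp [hc0]
    have h3 : ∑ v ∈ (c k).support, c k v * v k' = (Pi.single k 1 : Fin K → ZMod 2) k' := by
      have h := congrFun (hcsum k) k'
      simpa [Finsupp.sum, Finset.sum_apply, smul_eq_mul] using h
    have h4 : ∑ v ∈ (c k).support \ F, c k v * v k' = 0 := by
      apply Finset.sum_eq_zero
      intro v hv
      rcases Finset.mem_sdiff.mp hv with ⟨hvs, hvF⟩
      rcases hcsupp k hvs with hcode | hsd
      · exact absurd
          (Finset.mem_biUnion.mpr
            (by rcases Set.mem_iUnion.mp hcode with ⟨n, hn⟩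
                exact ⟨n, Finset.mem_univ n, hn⟩)) hvF
      · rcases hsd with ⟨j, hj, rfl⟩
        rw [hside j hj, mul_zero]
    have h5 : ∑ v ∈ (c k).support ∩ F, c k v * v k' + ∑ v ∈ (c k).support \ F, c k v * v k'
        = ∑ v ∈ (c k).support, c k v * v k' :=
      Finset.sum_inter_add_sum_sdiff _ _ _
    rw [h1, h2]
    rw [← h5, h4, add_zero] at h3
    exact h3
  have hfits : Fits K N M R A := by
    refine ⟨?_, ?_, ?_⟩
    · intro n k k' h1
      have hne : A n k k' ≠ 0 := by rw [h1]; exact one_ne_zero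
      have : ∃ v ∈ T n, c k v * v k' ≠ 0 := by
        by_contra h
        push_neg at h
        exact hne (Finset.sum_eq_zero h)
      rcases this with ⟨v, hvT, hv0⟩
      have hvk' : v k' ≠ 0 := fun h => hv0 (by rw [h, mul_zero])
      exact hsupp n v (hTS n hvT) k' hvk'
    · intro k
      have := key k k (fun j hj => by
        have : j ≠ k := fun h => hR k (h ▸ hj)
        exact Pi.single_eq_of_ne' this 1)
      rwa [Pi.single_eq_same] at this
    · intro k k' hk'k hk'R
      have := key k k' (fun j hj => by
        have : j ≠ k' := fun h => hk'R (h ▸ hj)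
        exact Pi.single_eq_of_ne' this 1)
      rwa [Pi.single_eq_of_ne hk'k] at this
  have hrank : ∀ n, (A n).rank ≤ (S n).card := by
    intro n
    have hAeq : A n = (Matrix.of fun k (v : ↥(T n)) => c k (v : Fin K → ZMod 2)) *
        (Matrix.of fun (v : ↥(T n)) k' => (v : Fin K → ZMod 2) k') := by
      ext k k'
      simp only [hAdef, Matrix.of_apply, Matrix.mul_apply]
      exact (Finset.sum_coe_sort (T n) (fun v => c k v * v k')).symm
    calc (A n).rank ≤ (Matrix.of fun (v : ↥(T n)) k' => (v : Fin K → ZMod 2) k').rank := by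
          rw [hAeq]; exact Matrix.rank_mul_le_right _ _
      _ ≤ Fintype.card ↥(T n) := Matrix.rank_le_card_height _
      _ = (T n).card := Fintype.card_coe _
      _ ≤ (S n).card := Finset.card_le_card (hTS n)
  have hsum : ∑ n, (A n).rank ≤ ∑ n, (S n).card :=
    Finset.sum_le_sum (fun n _ => hrank n)
  refine ⟨⟨A, hfits, hsum⟩, ?_⟩
  exact le_trans (Nat.sInf_le ⟨A, hfits, rfl⟩) hsum
end

section
/- Lemma 2 (decodability implies span membership): let k ∈ Fin K, let 𝓡 k ⊆ Fin K be a finite set with k ∉ 𝓡 k, and let u_1,…,u_ℓ : Fin K → ZMod 2 be arbitrary vectors. Suppose there exists a (possibly nonlinear) decoding function D : (Fin ℓ → ZMod 2) → ((𝓡 k) → ZMod 2) → ZMod 2 such that for every x : Fin K → ZMod 2 one has D (fun i => ∑_{m ∈ Fin K} (u_i m) · (x m)) (fun j => x j) = x k. Then the standard basis vector e_k lies in the 𝔽₂-linear span of {u_1,…,u_ℓ} ∪ {e_j : j ∈ 𝓡 k}. -/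
open Finset

/-- Lemma 2 (decodability implies span membership): if receiver `k` can recover
`x k` from the `ℓ` transmitted linear combinations `u i ⬝ x` and its side
information `(x j)_{j ∈ Rk}` via some (possibly nonlinear) decoder `D`, then the
standard basis vector `e k` lies in the `𝔽₂`-span of the transmission vectors
together with the basis vectors of the side-information coordinates. -/
theorem decodable_implies_span
    (K ℓ : ℕ) (k : Fin K) (Rk : Finset (Fin K)) (hk : k ∉ Rk)
    (u : Fin ℓ → (Fin K → ZMod 2))
    (D : (Fin ℓ → ZMod 2) → ({j : Fin K // j ∈ Rk} → ZMod 2) → ZMod 2)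
    (hD : ∀ x : Fin K → ZMod 2,
      D (fun i => ∑ m : Fin K, u i m * x m) (fun j => x j.1) = x k) :
    (Pi.single k 1 : Fin K → ZMod 2) ∈
      Submodule.span (ZMod 2)
        (Set.range u ∪ {v | ∃ j ∈ Rk, v = (Pi.single j 1 : Fin K → ZMod 2)}) := by
  by_contra hx
  set S : Set (Fin K → ZMod 2) :=
    Set.range u ∪ {v | ∃ j ∈ Rk, v = (Pi.single j 1 : Fin K → ZMod 2)}
  set p : Submodule (ZMod 2) (Fin K → ZMod 2) := Submodule.span (ZMod 2) S
  obtain ⟨f, hfk, hfp⟩ := p.exists_dual_map_eq_bot_of_notMem hx inferInstance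
  have hfS : ∀ v ∈ S, f v = 0 := by
    intro v hv
    have : f v ∈ p.map f := ⟨v, Submodule.subset_span hv, rfl⟩
    simpa [hfp] using this
  -- the vector y m := f (e_m)
  set y : Fin K → ZMod 2 := fun m => f (Pi.single m 1)
  -- f v = ∑ m, v m * y m
  have hf_eq : ∀ v : Fin K → ZMod 2, f v = ∑ m : Fin K, v m * y m := by
    intro v
    have hv : v = ∑ m : Fin K, v m • (Pi.single m 1 : Fin K → ZMod 2) := by
      ext n; simp [Pi.single_apply, Finset.sum_apply, mul_comm]
    conv_lhs => rw [hv]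
    rw [map_sum]
    simp [y, smul_eq_mul]
  -- transmissions of y are 0
  have htrans : ∀ i, ∑ m : Fin K, u i m * y m = 0 := by
    intro i
    rw [← hf_eq]
    exact hfS _ (Or.inl ⟨i, rfl⟩)
  -- side info of y is 0
  have hside : ∀ j : {j : Fin K // j ∈ Rk}, y j.1 = 0 := by
    intro j
    have := hfS (Pi.single j.1 1) (Or.inr ⟨j.1, j.2, rfl⟩)
    rw [hf_eq] at this
    simpa [Pi.single_apply, mul_comm] using this
  have h0 := hD 0
  have hy := hD y
  have heq : D (fun i => ∑ m : Fin K, u i m * y m) (fun j => y j.1)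
      = D (fun i => ∑ m : Fin K, u i m * (0 : Fin K → ZMod 2) m)
          (fun j => (0 : Fin K → ZMod 2) j.1) := by
    congr 1
    · funext i; simp [htrans i]
    · funext j; simp [hside j]
  rw [hy, h0] at heq
  have hyk : y k = f (Pi.single k 1) := rfl
  simp only [Pi.zero_apply] at heq
  exact hfk (by rw [← hyk, heq])
end

section
/- Fitting characterization (completeness of the enumeration in Algorithm 1): a tuple A : Fin N → Matrix (Fin K) (Fin K) (ZMod 2) is the composite adjacency tuple of some valid sub-hypergraph of the side-information hypergraph if and only if A satisfies the three matrix fitting conditions: (support) A n k k' = 1 implies k' ∈ 𝓜 n; (demand parity) for every k, ∑_{n} A n k k = 1 in ZMod 2; (coupled parity) for every k and k' with k' ≠ k and k' ∉ 𝓡 k, ∑_{n} A n k k' = 0 in ZMod 2. -/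
open Finset

private lemma zmod2_em (x : ZMod 2) : x = 0 ∨ x = 1 := by revert x; decide

private lemma zmod2_ite (x : ZMod 2) : (if x = 1 then (1 : ZMod 2) else 0) = x := by
  revert x; decide

private lemma zmod2_add_self (x : ZMod 2) : x + x = 0 := by revert x; decide

private lemma odd_iff_cast_one (m : ℕ) : Odd m ↔ (m : ZMod 2) = 1 := by
  rw [Nat.odd_iff, ← ZMod.natCast_mod m 2]
  rcases Nat.mod_two_eq_zero_or_one m with h | h <;> simp [h]

/-- Fitting characterization (completeness of the enumeration in Algorithm 1):
a tuple `A` is the composite adjacency tuple of some valid sub-hypergraph of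
the side-information hypergraph if and only if `A` satisfies the three matrix
fitting conditions.  Hyperedges are encoded as 4-tuples `(k, k', n, n')`. -/
theorem fits_iff_valid_subhypergraph
    (K N : ℕ) (M : Fin N → Finset (Fin K)) (R : Fin K → Finset (Fin K))
    (hR : ∀ k, k ∉ R k)
    (A : Fin N → Matrix (Fin K) (Fin K) (ZMod 2)) :
    (∃ Ed' Es' Ec' : Finset (Fin K × Fin K × Fin N × Fin N),
      -- `Ed'` consists of demand hyperedges
      (∀ e ∈ Ed', e.1 = e.2.1 ∧ e.2.2.1 = e.2.2.2 ∧ e.1 ∈ M e.2.2.1) ∧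
      -- `Es'` consists of cached hyperedges
      (∀ e ∈ Es', e.2.1 ≠ e.1 ∧ e.2.1 ∈ R e.1 ∧ e.2.1 ∈ M e.2.2.1 ∧
        e.2.2.1 = e.2.2.2) ∧
      -- `Ec'` consists of coupled hyperedges
      (∀ e ∈ Ec', e.2.2.1 ≠ e.2.2.2 ∧ e.2.1 ≠ e.1 ∧ e.2.1 ∉ R e.1 ∧
        e.2.1 ∈ M e.2.2.1 ∧ e.2.1 ∈ M e.2.2.2) ∧
      -- `Ec'` is symmetric in the sender pair
      (∀ k k' : Fin K, ∀ n n' : Fin N, (k, k', n, n') ∈ Ec' ↔ (k, k', n', n) ∈ Ec') ∧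
      -- validity: every receiver appears in an odd number of demand hyperedges
      (∀ k : Fin K, Odd (Ed'.filter (fun e => e.1 = k)).card) ∧
      -- `A` is the composite adjacency tuple of the sub-hypergraph
      (∀ n k k', A n k k' =
        (if (k, k', n, n) ∈ Ed' ∪ Es' then (1 : ZMod 2) else 0) +
        ∑ n' ∈ univ.filter (fun n' => n' ≠ n),
          (if (k, k', n, n') ∈ Ec' then (1 : ZMod 2) else 0)))
    ↔ Fits K N M R A := by
  constructor
  · rintro ⟨Ed', Es', Ec', hEd, hEs, hEc, hsym, hodd, hA⟩
    refine ⟨?_, ?_, ?_⟩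
    · -- support
      intro n k k' h
      by_contra hM
      rw [hA] at h
      have h1 : (if (k, k', n, n) ∈ Ed' ∪ Es' then (1 : ZMod 2) else 0) = 0 := by
        rw [if_neg]
        intro hmem
        rcases mem_union.1 hmem with hm | hm
        · obtain ⟨h1, _, h3⟩ := hEd _ hm
          have h1' : k = k' := h1
          have h3' : k ∈ M n := h3
          exact hM (h1' ▸ h3')
        · exact hM (hEs _ hm).2.2.1
      have h2 : ∑ n' ∈ univ.filter (fun n' => n' ≠ n),
          (if (k, k', n, n') ∈ Ec' then (1 : ZMod 2) else 0) = 0 := by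
        refine Finset.sum_eq_zero fun n' _ => ?_
        rw [if_neg]
        intro hmem
        exact hM (hEc _ hmem).2.2.2.1
      rw [h1, h2] at h
      exact one_ne_zero h.symm
    · -- demand parity
      intro k
      have key : ∀ n, A n k k = if (k, k, n, n) ∈ Ed' then 1 else 0 := by
        intro n
        rw [hA]
        have h1 : ((k, k, n, n) ∈ Ed' ∪ Es') ↔ (k, k, n, n) ∈ Ed' := by
          rw [mem_union, or_iff_left]
          intro hm
          exact (hEs _ hm).1 rfl
        have h2 : ∑ n' ∈ univ.filter (fun n' => n' ≠ n),
            (if (k, k, n, n') ∈ Ec' then (1 : ZMod 2) else 0) = 0 := by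
          refine Finset.sum_eq_zero fun n' _ => ?_
          rw [if_neg]
          intro hm
          exact (hEc _ hm).2.1 rfl
        rw [h2, add_zero]
        simp only [h1]
      have hcard : (univ.filter (fun n => (k, k, n, n) ∈ Ed')).card
          = (Ed'.filter (fun e => e.1 = k)).card := by
        refine Finset.card_bij' (fun n _ => (k, k, n, n)) (fun e _ => e.2.2.1)
          ?_ ?_ ?_ ?_
        · intro n hn
          rw [mem_filter] at hn ⊢
          exact ⟨hn.2, rfl⟩
        · intro e he
          rw [mem_filter] at he ⊢
          obtain ⟨he1, he2⟩ := he
          obtain ⟨h1, h3, _⟩ := hEd _ he1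
          obtain ⟨a, b, c, d⟩ := e
          have ha : a = k := he2
          have hab : a = b := h1
          have hcd : c = d := h3
          subst hab; subst hcd; subst ha
          exact ⟨mem_univ _, he1⟩
        · intro n hn; rfl
        · intro e he
          rw [mem_filter] at he
          obtain ⟨he1, he2⟩ := he
          obtain ⟨h1, h3, _⟩ := hEd _ he1
          obtain ⟨a, b, c, d⟩ := e
          have ha : a = k := he2
          have hab : a = b := h1
          have hcd : c = d := h3
          subst hab; subst hcd; subst ha
          rfl
      calc ∑ n, A n k k = ∑ n, if (k, k, n, n) ∈ Ed' then (1 : ZMod 2) else 0 := by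
              simp only [key]
        _ = ((univ.filter (fun n => (k, k, n, n) ∈ Ed')).card : ZMod 2) := by
              rw [Finset.sum_boole]
        _ = 1 := by rw [hcard, ← odd_iff_cast_one]; exact hodd k
    · -- coupled parity
      intro k k' hkk hRk
      have key : ∀ n, A n k k' = ∑ n' ∈ univ.filter (fun n' => n' ≠ n),
          (if (k, k', n, n') ∈ Ec' then (1 : ZMod 2) else 0) := by
        intro n
        rw [hA]
        rw [if_neg, zero_add]
        intro hmem
        rcases mem_union.1 hmem with hm | hm
        · exact hkk ((hEd _ hm).1.symm)
        · exact hRk (hEs _ hm).2.1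
      calc ∑ n, A n k k'
          = ∑ n, ∑ n' ∈ univ.filter (fun n' => n' ≠ n),
              (if (k, k', n, n') ∈ Ec' then (1 : ZMod 2) else 0) := by
            simp only [key]
        _ = ∑ p ∈ univ.sigma (fun n => univ.filter (fun n' => n' ≠ n)),
              (if (k, k', p.1, p.2) ∈ Ec' then (1 : ZMod 2) else 0) := by
            rw [Finset.sum_sigma]
        _ = 0 := by
            refine Finset.sum_involution (fun p _ => ⟨p.2, p.1⟩) ?_ ?_ ?_ ?_
            · intro p hp
              simp only [hsym k k' p.1 p.2]
              exact zmod2_add_self _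
            · intro p hp _
              simp only [Finset.mem_sigma, mem_filter, mem_univ, true_and] at hp
              intro h
              have hh : p.1 = p.2 := (congrArg Sigma.fst h).symm
              exact hp hh.symm
            · intro p hp
              simp only [Finset.mem_sigma, mem_filter, mem_univ, true_and] at hp ⊢
              exact fun h => hp h.symm
            · intro p hp; rfl
  · rintro ⟨hsupp, hdem, hcoup⟩
    refine ⟨univ.filter (fun e : Fin K × Fin K × Fin N × Fin N =>
        e.1 = e.2.1 ∧ e.2.2.1 = e.2.2.2 ∧ A e.2.2.1 e.1 e.1 = 1),
      univ.filter (fun e : Fin K × Fin K × Fin N × Fin N =>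
        e.2.1 ≠ e.1 ∧ e.2.1 ∈ R e.1 ∧ e.2.2.1 = e.2.2.2 ∧ A e.2.2.1 e.1 e.2.1 = 1),
      univ.filter (fun e : Fin K × Fin K × Fin N × Fin N =>
        e.2.2.1 ≠ e.2.2.2 ∧ e.2.1 ≠ e.1 ∧ e.2.1 ∉ R e.1 ∧
        A e.2.2.1 e.1 e.2.1 = 1 ∧ A e.2.2.2 e.1 e.2.1 = 1),
      ?_, ?_, ?_, ?_, ?_, ?_⟩
    · intro e he
      simp only [mem_filter, mem_univ, true_and] at he
      exact ⟨he.1, he.2.1, hsupp _ _ _ he.2.2⟩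
    · intro e he
      simp only [mem_filter, mem_univ, true_and] at he
      exact ⟨he.1, he.2.1, hsupp _ _ _ he.2.2.2, he.2.2.1⟩
    · intro e he
      simp only [mem_filter, mem_univ, true_and] at he
      exact ⟨he.1, he.2.1, he.2.2.1, hsupp _ _ _ he.2.2.2.1, hsupp _ _ _ he.2.2.2.2⟩
    · intro k k' n n'
      simp only [mem_filter, mem_univ, true_and]
      constructor
      · rintro ⟨h1, h2, h3, h4, h5⟩; exact ⟨h1.symm, h2, h3, h5, h4⟩
      · rintro ⟨h1, h2, h3, h4, h5⟩; exact ⟨h1.symm, h2, h3, h5, h4⟩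
    · intro k
      rw [odd_iff_cast_one]
      have hcard : ((univ.filter (fun e : Fin K × Fin K × Fin N × Fin N =>
          e.1 = e.2.1 ∧ e.2.2.1 = e.2.2.2 ∧
          A e.2.2.1 e.1 e.1 = 1)).filter (fun e => e.1 = k)).card
          = (univ.filter (fun n => A n k k = 1)).card := by
        refine Finset.card_bij' (fun e _ => e.2.2.1) (fun n _ => (k, k, n, n)) ?_ ?_ ?_ ?_
        · intro e he
          rw [mem_filter, mem_filter] at he
          obtain ⟨⟨_, h1, h2, h3⟩, h4⟩ := he
          rw [mem_filter]
          exact ⟨mem_univ _, h4 ▸ h3⟩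
        · intro n hn
          rw [mem_filter] at hn
          rw [mem_filter, mem_filter]
          exact ⟨⟨mem_univ _, rfl, rfl, hn.2⟩, rfl⟩
        · intro e he
          rw [mem_filter, mem_filter] at he
          obtain ⟨⟨_, h1, h2, h3⟩, h4⟩ := he
          obtain ⟨a, b, c, d⟩ := e
          have ha : a = k := h4
          have hab : a = b := h1
          have hcd : c = d := h2
          subst hab; subst ha; subst hcd
          rfl
        · intro n hn; rfl
      rw [hcard]
      calc ((univ.filter (fun n => A n k k = 1)).card : ZMod 2)
          = ∑ n, if A n k k = 1 then (1 : ZMod 2) else 0 := by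
            rw [Finset.sum_boole]
        _ = ∑ n, A n k k := by simp only [zmod2_ite]
        _ = 1 := hdem k
    · intro n k k'
      by_cases hkk : k' = k
      · subst hkk
        have hmem : ((k', k', n, n) ∈ univ.filter (fun e : Fin K × Fin K × Fin N × Fin N =>
            e.1 = e.2.1 ∧ e.2.2.1 = e.2.2.2 ∧ A e.2.2.1 e.1 e.1 = 1) ∪
            univ.filter (fun e : Fin K × Fin K × Fin N × Fin N =>
            e.2.1 ≠ e.1 ∧ e.2.1 ∈ R e.1 ∧ e.2.2.1 = e.2.2.2 ∧ A e.2.2.1 e.1 e.2.1 = 1)) ↔ A n k' k' = 1 := by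
          rw [mem_union, mem_filter, mem_filter]
          constructor
          · rintro (⟨_, _, _, h⟩ | ⟨_, hne, _⟩)
            · exact h
            · exact absurd rfl hne
          · intro h
            exact Or.inl ⟨mem_univ _, rfl, rfl, h⟩
        have h2 : ∑ n' ∈ univ.filter (fun n' => n' ≠ n),
            (if (k', k', n, n') ∈ univ.filter (fun e : Fin K × Fin K × Fin N × Fin N =>
              e.2.2.1 ≠ e.2.2.2 ∧ e.2.1 ≠ e.1 ∧ e.2.1 ∉ R e.1 ∧
              A e.2.2.1 e.1 e.2.1 = 1 ∧ A e.2.2.2 e.1 e.2.1 = 1)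
              then (1 : ZMod 2) else 0) = 0 := by
          refine Finset.sum_eq_zero fun n' _ => ?_
          rw [if_neg]
          intro hm
          rw [mem_filter] at hm
          exact hm.2.2.1 rfl
        rw [h2, add_zero]
        rcases zmod2_em (A n k' k') with h0 | h0
        · rw [h0, if_neg]
          intro hm
          have h := hmem.1 hm
          rw [h0] at h
          exact zero_ne_one h
        · rw [h0, if_pos (hmem.2 h0)]
      · by_cases hRk : k' ∈ R k
        · have hmem : ((k, k', n, n) ∈ univ.filter (fun e : Fin K × Fin K × Fin N × Fin N =>
            e.1 = e.2.1 ∧ e.2.2.1 = e.2.2.2 ∧ A e.2.2.1 e.1 e.1 = 1) ∪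
            univ.filter (fun e : Fin K × Fin K × Fin N × Fin N =>
            e.2.1 ≠ e.1 ∧ e.2.1 ∈ R e.1 ∧ e.2.2.1 = e.2.2.2 ∧ A e.2.2.1 e.1 e.2.1 = 1)) ↔ A n k k' = 1 := by
            rw [mem_union, mem_filter, mem_filter]
            constructor
            · rintro (⟨_, heq, _⟩ | ⟨_, _, _, _, h⟩)
              · exact absurd heq.symm hkk
              · exact h
            · intro h
              exact Or.inr ⟨mem_univ _, hkk, hRk, rfl, h⟩
          have h2 : ∑ n' ∈ univ.filter (fun n' => n' ≠ n),
              (if (k, k', n, n') ∈ univ.filter (fun e : Fin K × Fin K × Fin N × Fin N =>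
                e.2.2.1 ≠ e.2.2.2 ∧ e.2.1 ≠ e.1 ∧ e.2.1 ∉ R e.1 ∧
                A e.2.2.1 e.1 e.2.1 = 1 ∧ A e.2.2.2 e.1 e.2.1 = 1)
                then (1 : ZMod 2) else 0) = 0 := by
            refine Finset.sum_eq_zero fun n' _ => ?_
            rw [if_neg]
            intro hm
            rw [mem_filter] at hm
            exact hm.2.2.2.1 hRk
          rw [h2, add_zero]
          rcases zmod2_em (A n k k') with h0 | h0
          · rw [h0, if_neg]
            intro hm
            have h := hmem.1 hm
            rw [h0] at h
            exact zero_ne_one h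
          · rw [h0, if_pos (hmem.2 h0)]
        · have hnot : (k, k', n, n) ∉ univ.filter (fun e : Fin K × Fin K × Fin N × Fin N =>
            e.1 = e.2.1 ∧ e.2.2.1 = e.2.2.2 ∧ A e.2.2.1 e.1 e.1 = 1) ∪
            univ.filter (fun e : Fin K × Fin K × Fin N × Fin N =>
            e.2.1 ≠ e.1 ∧ e.2.1 ∈ R e.1 ∧ e.2.2.1 = e.2.2.2 ∧ A e.2.2.1 e.1 e.2.1 = 1) := by
            rw [mem_union]
            rintro (hm | hm) <;> rw [mem_filter] at hm
            · exact hkk hm.2.1.symm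
            · exact hRk hm.2.2.1
          rw [if_neg hnot, zero_add]
          rcases zmod2_em (A n k k') with h0 | h0
          · rw [h0]
            symm
            refine Finset.sum_eq_zero fun n' _ => ?_
            rw [if_neg]
            intro hm
            rw [mem_filter] at hm
            have h4 := hm.2.2.2.2.1
            rw [h0] at h4
            exact zero_ne_one h4
          · have hterm : ∀ n' ∈ univ.filter (fun n' => n' ≠ n),
                (if (k, k', n, n') ∈ univ.filter (fun e : Fin K × Fin K × Fin N × Fin N =>
                  e.2.2.1 ≠ e.2.2.2 ∧ e.2.1 ≠ e.1 ∧ e.2.1 ∉ R e.1 ∧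
                  A e.2.2.1 e.1 e.2.1 = 1 ∧ A e.2.2.2 e.1 e.2.1 = 1)
                  then (1 : ZMod 2) else 0) = if A n' k k' = 1 then 1 else 0 := by
              intro n' hn'
              rw [mem_filter] at hn'
              by_cases h : A n' k k' = 1
              · rw [if_pos, if_pos h]
                exact mem_filter.2 ⟨mem_univ _, Ne.symm hn'.2, hkk, hRk, h0, h⟩
              · rw [if_neg, if_neg h]
                intro hm
                rw [mem_filter] at hm
                exact h hm.2.2.2.2.2
            rw [h0, Finset.sum_congr rfl hterm]
            have hite : ∑ n' ∈ univ.filter (fun n' => n' ≠ n),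
                (if A n' k k' = 1 then (1 : ZMod 2) else 0)
                = ∑ n' ∈ univ.filter (fun n' => n' ≠ n), A n' k k' := by
              simp only [zmod2_ite]
            rw [hite]
            have hsplit : A n k k' + ∑ n' ∈ univ.filter (fun n' => n' ≠ n), A n' k k'
                = ∑ n', A n' k k' := by
              rw [Finset.filter_ne' univ n, ← Finset.add_sum_erase univ _ (mem_univ n)]
            have htot := hcoup k k' hkk hRk
            calc (1 : ZMod 2)
                = A n k k' + (A n k k' + ∑ n' ∈ univ.filter (fun n' => n' ≠ n), A n' k k') := by
                  rw [hsplit, htot, add_zero, h0]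
              _ = (A n k k' + A n k k') + ∑ n' ∈ univ.filter (fun n' => n' ≠ n), A n' k k' := by
                  rw [add_assoc]
              _ = ∑ n' ∈ univ.filter (fun n' => n' ≠ n), A n' k k' := by
                  rw [zmod2_add_self, zero_add]
end

section
/- Theorem 3 (complement clique lower bound): let V ⊆ Fin K be a nonempty set of receivers such that V × V ⊆ 𝓖̄_{n₀} for some sender n₀, and such that for every sender n ∈ Fin N either V × V ⊆ 𝓖̄_n, or k ∉ 𝓜 n for every k ∈ V. Then for every fitting tuple A one has |V| ≤ ∑_{n} rank_{𝔽₂}(A n); consequently |V| is a lower bound on the hyper-minrank of the instance. -/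
open Finset

/-- The complement relation `𝓖̄ n` of the side-information hypergraph at sender
`n`: `(k, k)` is present iff `k ∈ 𝓜 n`, and for `k' ≠ k`, `(k, k')` is present
iff no cached and no coupled hyperedge joins `k` to `k'` at sender `n`. -/
def GBar (K N : ℕ) (M : Fin N → Finset (Fin K)) (R : Fin K → Finset (Fin K))
    (n : Fin N) (k k' : Fin K) : Prop :=
  if k' = k then k ∈ M n
  else ¬(k' ∈ R k ∧ k' ∈ M n) ∧
    ¬(k' ∉ R k ∧ k' ∈ M n ∧ ∃ n', n' ≠ n ∧ k' ∈ M n')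

lemma zmod2_eq_one_of_ne_zero {a : ZMod 2} (h : a ≠ 0) : a = 1 := by
  revert h; revert a; decide

lemma rank_add_le' {K : ℕ} (A B : Matrix (Fin K) (Fin K) (ZMod 2)) :
    (A + B).rank ≤ A.rank + B.rank := by
  simp only [Matrix.rank]
  have h : LinearMap.range (A + B).mulVecLin ≤
      LinearMap.range A.mulVecLin ⊔ LinearMap.range B.mulVecLin := by
    rintro x ⟨v, rfl⟩
    rw [Matrix.mulVecLin_add]
    exact Submodule.add_mem_sup ⟨v, rfl⟩ ⟨v, rfl⟩
  exact le_trans (Submodule.finrank_mono h)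
    (Submodule.finrank_add_le_finrank_add_finrank _ _)

lemma rank_sum_le {K : ℕ} {ι : Type*} [DecidableEq ι] (s : Finset ι)
    (f : ι → Matrix (Fin K) (Fin K) (ZMod 2)) :
    (∑ i ∈ s, f i).rank ≤ ∑ i ∈ s, (f i).rank := by
  induction s using Finset.induction_on with
  | empty => simp [Matrix.rank_zero]
  | insert _ _ h ih =>
    rw [Finset.sum_insert h, Finset.sum_insert h]
    exact le_trans (rank_add_le' _ _) (add_le_add_right ih _)

/-- Theorem 3 (complement clique lower bound): if `V` is a nonempty set of
receivers with `V × V ⊆ 𝓖̄ n₀` for some sender `n₀`, and for every sender `n`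
either `V × V ⊆ 𝓖̄ n` or no message of `V` is stored at `n`, then `|V|` lower
bounds the total rank of every fitting tuple, hence the hyper-minrank. -/
theorem complement_clique_lower_bound
    (K N : ℕ) (M : Fin N → Finset (Fin K)) (R : Fin K → Finset (Fin K))
    (hR : ∀ k, k ∉ R k)
    (V : Finset (Fin K)) (hV : V.Nonempty)
    (n₀ : Fin N) (hV0 : ∀ k ∈ V, ∀ k' ∈ V, GBar K N M R n₀ k k')
    (hall : ∀ n : Fin N,
      (∀ k ∈ V, ∀ k' ∈ V, GBar K N M R n k k') ∨ (∀ k ∈ V, k ∉ M n)) :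
    (∀ A : Fin N → Matrix (Fin K) (Fin K) (ZMod 2),
      Fits K N M R A → V.card ≤ ∑ n, (A n).rank) ∧
    (∀ A : Fin N → Matrix (Fin K) (Fin K) (ZMod 2),
      Fits K N M R A →
      V.card ≤ sInf {r : ℕ | ∃ B : Fin N → Matrix (Fin K) (Fin K) (ZMod 2),
        Fits K N M R B ∧ ∑ n, (B n).rank = r}) := by
  have main : ∀ A : Fin N → Matrix (Fin K) (Fin K) (ZMod 2),
      Fits K N M R A → V.card ≤ ∑ n, (A n).rank := by
    intro A hA
    obtain ⟨hsupp, hdiag, hcoup⟩ := hA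
    -- off-diagonal entries vanish on V × V for every sender
    have hoff : ∀ n : Fin N, ∀ k ∈ V, ∀ k' ∈ V, k' ≠ k → A n k k' = 0 := by
      intro n k hk k' hk' hne
      by_contra h0
      have h1 : A n k k' = 1 := zmod2_eq_one_of_ne_zero h0
      have hMn : k' ∈ M n := hsupp n k k' h1
      rcases hall n with hG | hN
      · have hg := hG k hk k' hk'
        rw [GBar, if_neg hne] at hg
        obtain ⟨hg1, hg2⟩ := hg
        by_cases hRk : k' ∈ R k
        · exact hg1 ⟨hRk, hMn⟩
        · -- n is the unique sender storing k'
          have huniq : ∀ m : Fin N, m ≠ n → A m k k' = 0 := by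
            intro m hm
            by_contra h0'
            have h1' : A m k k' = 1 := zmod2_eq_one_of_ne_zero h0'
            exact hg2 ⟨hRk, hMn, m, hm, hsupp m k k' h1'⟩
          have hsum := hcoup k k' hne hRk
          rw [Finset.sum_eq_single n (fun m _ hm => huniq m hm)
            (fun h => absurd (Finset.mem_univ n) h)] at hsum
          rw [h1] at hsum
          exact one_ne_zero hsum
      · exact hN k' hk' hMn
    -- the sum matrix restricted to V × V is the identity
    set S : Matrix (Fin K) (Fin K) (ZMod 2) := ∑ n, A n with hS
    have hsub : S.submatrix (fun i : V => (i : Fin K)) (fun i : V => (i : Fin K))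
        = (1 : Matrix V V (ZMod 2)) := by
      ext i j
      by_cases hij : (i : V) = j
      · subst hij
        simp only [Matrix.submatrix_apply, Matrix.one_apply_eq, hS,
          Matrix.sum_apply]
        exact hdiag i
      · have hne : ((j : Fin K)) ≠ (i : Fin K) := by
          intro h; exact hij (Subtype.ext h).symm
        rw [Matrix.submatrix_apply, Matrix.one_apply_ne' (Ne.symm hij), hS]
        rw [Matrix.sum_apply]
        exact Finset.sum_eq_zero fun n _ => hoff n i i.2 j j.2 hne
    -- submatrix has rank at most rank S
    have hranksub : ((1 : Matrix V V (ZMod 2)) : Matrix V V (ZMod 2)).rank ≤ S.rank := by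
      rw [← hsub]
      have h1 : ((1 : Matrix (Fin K) (Fin K) (ZMod 2)).submatrix
            (fun i : V => (i : Fin K)) (Equiv.refl (Fin K))) * S
          = S.submatrix (fun i : V => (i : Fin K)) id := by
        simpa using Matrix.one_submatrix_mul (α := ZMod 2)
          (fun i : V => (i : Fin K)) (Equiv.refl (Fin K)) S
      have h2 : (S.submatrix (fun i : V => (i : Fin K)) id) *
            ((1 : Matrix (Fin K) (Fin K) (ZMod 2)).submatrix (Equiv.refl (Fin K))
              (fun i : V => (i : Fin K)))
          = S.submatrix (fun i : V => (i : Fin K)) (fun i : V => (i : Fin K)) := by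
        simpa using Matrix.mul_submatrix_one (α := ZMod 2) (Equiv.refl (Fin K))
          (fun i : V => (i : Fin K)) (S.submatrix (fun i : V => (i : Fin K)) id)
      calc (S.submatrix (fun i : V => (i : Fin K)) (fun i : V => (i : Fin K))).rank
          = (((1 : Matrix (Fin K) (Fin K) (ZMod 2)).submatrix
              (fun i : V => (i : Fin K)) (Equiv.refl (Fin K))) * S *
              ((1 : Matrix (Fin K) (Fin K) (ZMod 2)).submatrix (Equiv.refl (Fin K))
                (fun i : V => (i : Fin K)))).rank := by rw [h1, h2]
        _ ≤ (((1 : Matrix (Fin K) (Fin K) (ZMod 2)).submatrix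
              (fun i : V => (i : Fin K)) (Equiv.refl (Fin K))) * S).rank :=
            Matrix.rank_mul_le_left _ _
        _ ≤ S.rank := Matrix.rank_mul_le_right _ _
    have hrank1 : ((1 : Matrix V V (ZMod 2))).rank = V.card := by
      rw [Matrix.rank_one, Fintype.card_coe]
    calc V.card = ((1 : Matrix V V (ZMod 2))).rank := hrank1.symm
      _ ≤ S.rank := hranksub
      _ ≤ ∑ n, (A n).rank := rank_sum_le Finset.univ A
  refine ⟨main, fun A hA => ?_⟩
  exact le_csInf ⟨∑ n, (A n).rank, A, hA, rfl⟩
    (fun r hr => by obtain ⟨B, hB, rfl⟩ := hr; exact main B hB)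
end

section
/- Forced zeros in fitting tuples (key step in the proof of Theorem 3): let A be a fitting tuple. For all k, k' ∈ Fin K with k' ≠ k and k' ∉ 𝓡 k, if the message x_{k'} is stored at exactly one sender, say {n ∈ Fin N : k' ∈ 𝓜 n} = {n₀}, then A n k k' = 0 for every sender n ∈ Fin N (in particular A n₀ k k' = 0, even though k' ∈ 𝓜 n₀). -/
open Finset

/-- Forced zeros in fitting tuples: if `k'` is not cached at receiver `k` and
the message `x k'` is stored at exactly one sender `n₀`, then in any fitting
tuple the entry `A n k k'` vanishes for every sender `n`. -/
theorem forced_zeros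
    (K N : ℕ) (M : Fin N → Finset (Fin K)) (R : Fin K → Finset (Fin K))
    (hR : ∀ k, k ∉ R k)
    (A : Fin N → Matrix (Fin K) (Fin K) (ZMod 2))
    (hA : Fits K N M R A)
    (k k' : Fin K) (hne : k' ≠ k) (hnR : k' ∉ R k)
    (n₀ : Fin N) (huniq : {n : Fin N | k' ∈ M n} = {n₀}) :
    ∀ n : Fin N, A n k k' = 0 := by
  obtain ⟨hsupp, -, hcoup⟩ := hA
  have hzero : ∀ n : Fin N, n ≠ n₀ → A n k k' = 0 := by
    intro n hn
    have hnotM : k' ∉ M n := by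
      intro hmem
      have : n ∈ ({n₀} : Set (Fin N)) := huniq ▸ hmem
      exact hn this
    rcases (by decide : ∀ x : ZMod 2, x = 0 ∨ x = 1) (A n k k') with h | h
    · exact h
    · exact absurd (hsupp n k k' h) hnotM
  have hsum := hcoup k k' hne hnR
  intro n
  by_cases hn : n = n₀
  · subst hn
    have : ∑ m, A m k k' = A n k k' := by
      refine Finset.sum_eq_single n (fun m _ hm => hzero m hm) (by simp)
    rwa [this] at hsum
  · exact hzero n hn
end

section
/- Lemma (complexity comparison, C₁ ≤ C₂): assume d_m ≥ 1 for every m ∈ Fin K. Define the integers E₁ := ∑_{k ∈ Fin K} ( (d_k − 1) + |𝓡 k| + ∑_{m ∈ Fin K, m ∉ 𝓡 k ∪ {k}} (d_m − 1) ) and E₂ := ∑_{k ∈ Fin K} ( ∑_{n ∈ Fin N} ( |𝓡 k ∩ 𝓜 n| + |((Fin K \ 𝓡 k) ∩ 𝓜 n ∩ 𝓜_c| ) − |(Fin K \ 𝓡 k) ∩ 𝓜_c| ). Then E₂ − E₁ = ∑_{k ∈ Fin K} ∑_{m ∈ 𝓡 k} (d_m − 1) ≥ 0, hence N·K³·2^{E₁}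 ≤ N·K³·2^{E₂}, with equality if and only if d_m = 1 for every m ∈ 𝓡 k and every k ∈ Fin K. -/
open Finset

/-- Lemma (complexity comparison, `C₁ ≤ C₂`): the search-space exponent `E₁` of
the paper's exact Algorithm 1 never exceeds the exponent `E₂` of the exhaustive
Kim–No algorithm; their difference is exactly `∑ k, ∑ m ∈ 𝓡 k, (d m - 1)`, and
the complexities `N·K³·2^{Eᵢ}` compare accordingly, with equality iff no
side-information symbol is replicated across senders. -/
theorem complexity_comparison_C1_le_C2
    (K N : ℕ) (M : Fin N → Finset (Fin K)) (R : Fin K → Finset (Fin K))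
    (hR : ∀ k, k ∉ R k)
    (d : Fin K → ℕ) (hd : ∀ m, d m = (univ.filter (fun n => m ∈ M n)).card)
    (hd1 : ∀ m, 1 ≤ d m)
    (Mc : Finset (Fin K)) (hMc : Mc = univ.filter (fun m => 2 ≤ d m))
    (E₁ E₂ : ℤ)
    (hE₁ : E₁ = ∑ k : Fin K, (((d k : ℤ) - 1) + ((R k).card : ℤ) +
      ∑ m ∈ univ.filter (fun m => m ∉ R k ∪ {k}), ((d m : ℤ) - 1)))
    (hE₂ : E₂ = ∑ k : Fin K,
      ((∑ n : Fin N, (((R k ∩ M n).card : ℤ) +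
          (((univ \ R k) ∩ M n ∩ Mc).card : ℤ))) -
        (((univ \ R k) ∩ Mc).card : ℤ))) :
    E₂ - E₁ = ∑ k : Fin K, ∑ m ∈ R k, ((d m : ℤ) - 1) ∧
    0 ≤ E₂ - E₁ ∧
    (N * K ^ 3 : ℝ) * 2 ^ E₁ ≤ (N * K ^ 3 : ℝ) * 2 ^ E₂ ∧
    ((N * K ^ 3 : ℝ) * 2 ^ E₁ = (N * K ^ 3 : ℝ) * 2 ^ E₂ ↔
      ∀ k : Fin K, ∀ m ∈ R k, d m = 1) := by
  -- sum over n of |S ∩ M n| equals ∑_{m ∈ S} d m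
  have hsum : ∀ (S : Finset (Fin K)),
      (∑ n : Fin N, ((S ∩ M n).card : ℤ)) = ∑ m ∈ S, (d m : ℤ) := by
    intro S
    have h1 : ∀ n : Fin N, ((S ∩ M n).card : ℤ)
        = ∑ m ∈ S, (if m ∈ M n then (1 : ℤ) else 0) := by
      intro n
      rw [← Finset.filter_mem_eq_inter, Finset.card_filter]
      push_cast
      rfl
    simp_rw [h1]
    rw [Finset.sum_comm]
    refine Finset.sum_congr rfl fun m _ => ?_
    rw [hd m, Finset.card_filter]
    push_cast
    rfl
  have key : E₂ - E₁ = ∑ k : Fin K, ∑ m ∈ R k, ((d m : ℤ) - 1) := by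
    rw [hE₁, hE₂, ← Finset.sum_sub_distrib]
    refine Finset.sum_congr rfl fun k _ => ?_
    have hcomm : ∀ n : Fin N, (univ \ R k) ∩ M n ∩ Mc = ((univ \ R k) ∩ Mc) ∩ M n := by
      intro n; ext x; simp only [Finset.mem_inter]; tauto
    simp_rw [Finset.sum_add_distrib, hsum (R k), hcomm, hsum ((univ \ R k) ∩ Mc)]
    set T := (univ \ R k) ∩ Mc with hT
    have e1 : ∑ m ∈ T, ((d m : ℤ) - 1) = ∑ m ∈ T, (d m : ℤ) - (T.card : ℤ) := by
      rw [Finset.sum_sub_distrib]; simp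
    have e2 : T = (univ \ R k).filter (fun m => 2 ≤ d m) := by
      rw [hT, hMc]; ext x
      simp only [Finset.mem_inter, Finset.mem_filter, Finset.mem_univ, true_and,
        Finset.mem_sdiff]
    have e3 : ∑ m ∈ T, ((d m : ℤ) - 1) = ∑ m ∈ univ \ R k, ((d m : ℤ) - 1) := by
      rw [e2]
      refine Finset.sum_filter_of_ne fun m _ hne => ?_
      have := hd1 m
      omega
    have e4 : univ \ R k = insert k (univ.filter (fun m => m ∉ R k ∪ {k})) := by
      ext x
      by_cases hx : x = k <;>
        simp [hx, hR k, Finset.mem_union, Finset.mem_singleton]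
    have hk : k ∉ univ.filter (fun m => m ∉ R k ∪ {k}) := by
      simp
    have e5 : ∑ m ∈ univ \ R k, ((d m : ℤ) - 1)
        = ((d k : ℤ) - 1) + ∑ m ∈ univ.filter (fun m => m ∉ R k ∪ {k}), ((d m : ℤ) - 1) := by
      rw [e4, Finset.sum_insert hk]
    have e6 : ∑ m ∈ R k, (d m : ℤ) = ∑ m ∈ R k, ((d m : ℤ) - 1) + ((R k).card : ℤ) := by
      rw [Finset.sum_sub_distrib]; simp
    rw [e6]
    rw [e3, e5] at e1
    linarith
  have h0 : 0 ≤ E₂ - E₁ := by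
    rw [key]
    refine Finset.sum_nonneg fun k _ => Finset.sum_nonneg fun m _ => ?_
    have := hd1 m; omega
  have hle : E₁ ≤ E₂ := by omega
  have h2 : (2 : ℝ) ^ E₁ ≤ (2 : ℝ) ^ E₂ := by
    exact zpow_le_zpow_right₀ one_le_two hle
  have hNK : (0 : ℝ) ≤ (N * K ^ 3 : ℝ) := by positivity
  refine ⟨key, h0, mul_le_mul_of_nonneg_left h2 hNK, ?_⟩
  constructor
  · intro heq
    rcases Nat.eq_zero_or_pos K with hK | hK
    · intro k
      exact absurd k.2 (by omega)
    rcases Nat.eq_zero_or_pos N with hN | hN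
    · exfalso
      have h := hd1 ⟨0, hK⟩
      rw [hd ⟨0, hK⟩] at h
      subst hN
      simp at h
    have hpos : (0 : ℝ) < (N * K ^ 3 : ℝ) := by
      have h1 : (0 : ℝ) < (N : ℝ) := by exact_mod_cast hN
      have h2 : (0 : ℝ) < (K : ℝ) := by exact_mod_cast hK
      positivity
    have h2eq : (2 : ℝ) ^ E₁ = (2 : ℝ) ^ E₂ :=
      mul_left_cancel₀ (ne_of_gt hpos) heq
    have hEeq : E₁ = E₂ := by
      by_contra hne
      have hlt : E₁ < E₂ := lt_of_le_of_ne hle hne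
      have : (2 : ℝ) ^ E₁ < (2 : ℝ) ^ E₂ := zpow_lt_zpow_right₀ one_lt_two hlt
      linarith
    have hzero : ∑ k : Fin K, ∑ m ∈ R k, ((d m : ℤ) - 1) = 0 := by omega
    intro k m hm
    have hk' := (Finset.sum_eq_zero_iff_of_nonneg
      (fun k _ => Finset.sum_nonneg fun m _ => by have := hd1 m; omega)).mp hzero
      k (Finset.mem_univ k)
    have hm' := (Finset.sum_eq_zero_iff_of_nonneg
      (fun m _ => by have := hd1 m; omega)).mp hk' m hm
    omega
  · intro h
    have hzero : E₂ - E₁ = 0 := by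
      rw [key]
      refine Finset.sum_eq_zero fun k _ => Finset.sum_eq_zero fun m hm => ?_
      rw [h k m hm]; ring
    have : E₁ = E₂ := by omega
    rw [this]
end

section
/- C₁-versus-C₃ exponent comparison (Lemma on comparison with LT–CMAR): let N ≥ 1 and set a_n := |𝓜 n| for n ∈ Fin N. Then E₃ := ∑_{n ∈ Fin N} (a_n² + a_n)/2 ≥ (∑_{n ∈ Fin N} a_n)² / (2N) (as real numbers). Consequently, under the hypotheses d_m ≥ 1 for all m, |𝓡 k| ≤ r₀ for all k, and ∑_n a_n ≤ (1+δ)·K with δ ≥ 0, if moreover K·r₀ + δ·K² ≤ (∑_n a_n)²/(2N), then E₁ ≤ E₃ and hence N·K³·2^{E₁} ≤ N·K³·2^{E₃}, i.e. the complexity of the exact Algorithm 1 does not exceed the exhaustive LT–CMAR complexity. -/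
open Finset

/-- `C₁`-versus-`C₃` exponent comparison (comparison with LT–CMAR): the LT–CMAR
exponent `E₃` is at least `(∑ n, a n)² / (2N)` by Cauchy–Schwarz, and hence,
under bounded replication and bounded side information, if
`K·r₀ + δ·K² ≤ (∑ n, a n)²/(2N)` then `E₁ ≤ E₃` and the complexity of the exact
Algorithm 1 does not exceed the exhaustive LT–CMAR complexity. -/
theorem C1_vs_C3_comparison
    (K N : ℕ) (hN : 1 ≤ N)
    (M : Fin N → Finset (Fin K)) (R : Fin K → Finset (Fin K))
    (hR : ∀ k, k ∉ R k)
    (a : Fin N → ℕ) (ha : ∀ n, a n = (M n).card)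
    (d : Fin K → ℕ) (hd : ∀ m, d m = (univ.filter (fun n => m ∈ M n)).card)
    (hd1 : ∀ m, 1 ≤ d m)
    (r₀ : ℕ) (hr : ∀ k, (R k).card ≤ r₀)
    (δ : ℝ) (hδ : 0 ≤ δ)
    (hload : ((∑ n : Fin N, a n : ℕ) : ℝ) ≤ (1 + δ) * K)
    (E₁ : ℤ)
    (hE₁ : E₁ = ∑ k : Fin K, (((R k).card : ℤ) +
      ∑ m ∈ univ.filter (fun m => m ∉ R k), ((d m : ℤ) - 1)))
    (E₃ : ℝ)
    (hE₃ : E₃ = ∑ n : Fin N, (((a n : ℝ) ^ 2 + (a n : ℝ)) / 2)) :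
    ((∑ n : Fin N, a n : ℕ) : ℝ) ^ 2 / (2 * N) ≤ E₃ ∧
    ((K * r₀ + δ * K ^ 2 : ℝ) ≤ ((∑ n : Fin N, a n : ℕ) : ℝ) ^ 2 / (2 * N) →
      (E₁ : ℝ) ≤ E₃ ∧
      (N * K ^ 3 : ℝ) * (2 : ℝ) ^ (E₁ : ℝ) ≤ (N * K ^ 3 : ℝ) * (2 : ℝ) ^ E₃) := by
  set S : ℕ := ∑ n : Fin N, a n with hS
  have hNpos : (0 : ℝ) < N := by exact_mod_cast hN
  -- Cauchy–Schwarz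
  have hcs : ((S : ℝ)) ^ 2 ≤ (N : ℝ) * ∑ n : Fin N, (a n : ℝ) ^ 2 := by
    have h := sq_sum_le_card_mul_sum_sq (s := (univ : Finset (Fin N)))
      (f := fun n => (a n : ℝ))
    simpa [hS, Finset.card_univ, Nat.cast_sum] using h
  have hpart1 : ((S : ℝ)) ^ 2 / (2 * N) ≤ E₃ := by
    have hsplit : E₃ = ((∑ n : Fin N, (a n : ℝ) ^ 2) + (S : ℝ)) / 2 := by
      rw [hE₃, ← Finset.sum_div, Finset.sum_add_distrib, hS]
      push_cast
      ring
    rw [hsplit]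
    rw [div_le_div_iff₀ (by positivity) (by norm_num)]
    have hSnn : (0 : ℝ) ≤ (S : ℝ) := by positivity
    nlinarith [hcs, hNpos]
  refine ⟨hpart1, fun hgap => ?_⟩
  -- double counting: ∑ d = S
  have hdc : ∑ m : Fin K, d m = S := by
    simp only [hd, hS, ha]
    calc ∑ m : Fin K, (univ.filter (fun n => m ∈ M n)).card
        = ∑ m : Fin K, ∑ n : Fin N, if m ∈ M n then 1 else 0 := by
          simp only [Finset.card_filter]
      _ = ∑ n : Fin N, ∑ m : Fin K, if m ∈ M n then 1 else 0 := Finset.sum_comm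
      _ = ∑ n : Fin N, (M n).card := by
          simp [← Finset.card_filter, Finset.filter_univ_mem]
  have hE1le : (E₁ : ℝ) ≤ (K : ℝ) * r₀ + δ * (K : ℝ) ^ 2 := by
    have hZ : E₁ ≤ (K : ℤ) * r₀ + K * ((S : ℤ) - K) := by
      rw [hE₁]
      calc ∑ k : Fin K, (((R k).card : ℤ) +
            ∑ m ∈ univ.filter (fun m => m ∉ R k), ((d m : ℤ) - 1))
          ≤ ∑ k : Fin K, ((r₀ : ℤ) + ((S : ℤ) - K)) := by
            apply Finset.sum_le_sum
            intro k _
            have h1 : ((R k).card : ℤ) ≤ (r₀ : ℤ) := by exact_mod_cast hr k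
            have h2 : ∑ m ∈ univ.filter (fun m => m ∉ R k), ((d m : ℤ) - 1)
                ≤ ∑ m : Fin K, ((d m : ℤ) - 1) := by
              apply Finset.sum_le_sum_of_subset_of_nonneg (Finset.filter_subset _ _)
              intro m _ _
              have := hd1 m
              omega
            have h3 : ∑ m : Fin K, ((d m : ℤ) - 1) = (S : ℤ) - K := by
              rw [Finset.sum_sub_distrib]
              simp [← Nat.cast_sum, hdc]
            linarith [h2.trans_eq h3]
        _ = (K : ℤ) * r₀ + K * ((S : ℤ) - K) := by
            simp only [Finset.sum_const, Finset.card_univ, Fintype.card_fin,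
              smul_eq_mul]
            ring
    have hZ' : (E₁ : ℝ) ≤ (K : ℝ) * r₀ + (K : ℝ) * ((S : ℝ) - K) := by
      exact_mod_cast hZ
    have hK : (0 : ℝ) ≤ (K : ℝ) := by positivity
    nlinarith [hload, hK]
  have hE1E3 : (E₁ : ℝ) ≤ E₃ := le_trans (hE1le.trans hgap) hpart1
  refine ⟨hE1E3, ?_⟩
  apply mul_le_mul_of_nonneg_left _ (by positivity)
  exact Real.rpow_le_rpow_of_exponent_le (by norm_num) hE1E3
end

section
/- Search-space size of Algorithm 1: assume d_m ≥ 1 for every m ∈ Fin K. Then the number of fitting tuples A : Fin N → Matrix (Fin K) (Fin K) (ZMod 2) equals 2 raised to the power ∑_{k ∈ Fin K} ( (d_k − 1) + ∑_{k' ∈ 𝓡 k} d_{k'} + ∑_{k' ∈ Fin K, k' ∉ 𝓡 k ∪ {k}} (d_{k'} − 1) ). (For each row k independently: the diagonal entries (A n k k)_n range over all odd-parity 0/1 assignments supported on 𝓜(k), contributing 2^{d_k−1} choices; for each cached k' ∈ 𝓡 k the entries (A n k k')_n range freely over assignments supported on 𝓜(k'), contributing 2^{d_{k'}} choices; and for each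 non-cached k' ≠ k they range over even-parity assignments supported on 𝓜(k'), contributing 2^{d_{k'}−1} choices.) -/
open Finset

lemma zmod2_ne_zero_iff (x : ZMod 2) : x ≠ 0 ↔ x = 1 := by revert x; decide

lemma card_supp {N : ℕ} (S : Finset (Fin N)) :
    Nat.card {v : Fin N → ZMod 2 // ∀ n, v n ≠ 0 → n ∈ S} = 2 ^ S.card := by
  have e : {v : Fin N → ZMod 2 // ∀ n, v n ≠ 0 → n ∈ S} ≃ (S → ZMod 2) :=
    { toFun := fun v s => v.1 s
      invFun := fun f => ⟨fun n => if h : n ∈ S then f ⟨n, h⟩ else 0,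
        fun n hn => by by_contra h; simp [h] at hn⟩
      left_inv := fun v => by
        ext n
        by_cases h : n ∈ S
        · simp [h]
        · simp only [h, dif_neg, not_false_iff]
          by_contra h2
          exact h (v.2 n (Ne.symm h2))
      right_inv := fun f => by ext s; simp }
  rw [Nat.card_congr e, Nat.card_eq_fintype_card]
  simp [ZMod.card]

lemma card_supp_sum {N : ℕ} (S : Finset (Fin N)) (hS : S.Nonempty) (c : ZMod 2) :
    Nat.card {v : Fin N → ZMod 2 // (∀ n, v n ≠ 0 → n ∈ S) ∧ ∑ n, v n = c} =
      2 ^ (S.card - 1) := by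
  obtain ⟨n₀, hn₀⟩ := hS
  have key : ∀ (f : Fin N → ZMod 2) (a : ZMod 2),
      ∑ n, Function.update f n₀ a n = a + (∑ n, f n) + f n₀ := by
    intro f a
    rw [Finset.sum_update_of_mem (mem_univ n₀)]
    have : ∑ n ∈ univ \ {n₀}, f n = (∑ n, f n) - f n₀ := by
      rw [eq_sub_iff_add_eq, Finset.sum_sdiff_eq_sub (by simp : {n₀} ⊆ univ)]
      simp [sub_add_cancel]
    rw [this]
    ring_nf
    rw [CharTwo.sub_eq_add]
  have e : {v : Fin N → ZMod 2 // (∀ n, v n ≠ 0 → n ∈ S) ∧ ∑ n, v n = c} ≃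
      {v : Fin N → ZMod 2 // ∀ n, v n ≠ 0 → n ∈ S.erase n₀} :=
    { toFun := fun v => ⟨Function.update v.1 n₀ 0, by
        intro n hn
        have hne : n ≠ n₀ := by
          intro h; subst h; simp [Function.update_self] at hn
        rw [Function.update_of_ne hne] at hn
        exact Finset.mem_erase.2 ⟨hne, v.2.1 n hn⟩⟩
      invFun := fun f => ⟨Function.update f.1 n₀ (c + ∑ n, f.1 n), by
        have hf0 : f.1 n₀ = 0 := by
          by_contra h
          exact (Finset.notMem_erase n₀ S) (f.2 n₀ h)
        constructor
        · intro n hn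
          by_cases h : n = n₀
          · subst h; exact hn₀
          · rw [Function.update_of_ne h] at hn
            exact Finset.mem_of_mem_erase (f.2 n hn)
        · rw [key, hf0, add_zero]
          rw [add_assoc, CharTwo.add_self_eq_zero, add_zero]⟩
      left_inv := fun v => by
        apply Subtype.ext
        show Function.update (Function.update v.1 n₀ 0) n₀
          (c + ∑ n, Function.update v.1 n₀ 0 n) = v.1
        have : ∑ n, Function.update v.1 n₀ 0 n = (∑ n, v.1 n) + v.1 n₀ := by
          rw [key]; ring
        rw [this, v.2.2]
        have : c + (c + v.1 n₀) = v.1 n₀ := by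
          rw [← add_assoc, CharTwo.add_self_eq_zero, zero_add]
        rw [Function.update_idem, this, Function.update_eq_self]
      right_inv := fun f => by
        apply Subtype.ext
        have hf0 : f.1 n₀ = 0 := by
          by_contra h
          exact (Finset.notMem_erase n₀ S) (f.2 n₀ h)
        show Function.update (Function.update f.1 n₀ (c + ∑ n, f.1 n)) n₀ 0 = f.1
        rw [Function.update_idem]; exact Function.update_eq_self_iff.mpr hf0.symm }
  rw [Nat.card_congr e, card_supp, Finset.card_erase_of_mem hn₀]

/-- Search-space size of Algorithm 1: the number of fitting tuples equals `2`
raised to `∑ k, ((d k − 1) + ∑_{k' ∈ 𝓡 k} d k' + ∑_{k' ∉ 𝓡 k ∪ {k}} (d k' − 1))`,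
where `d m` is the replication degree of message `m`. -/
theorem search_space_size
    (K N : ℕ) (M : Fin N → Finset (Fin K)) (R : Fin K → Finset (Fin K))
    (hR : ∀ k, k ∉ R k)
    (d : Fin K → ℕ) (hd : ∀ m, d m = (univ.filter (fun n => m ∈ M n)).card)
    (hd1 : ∀ m, 1 ≤ d m) :
    Nat.card {A : Fin N → Matrix (Fin K) (Fin K) (ZMod 2) // Fits K N M R A} =
      2 ^ (∑ k : Fin K, ((d k - 1) + (∑ k' ∈ R k, d k') +
        ∑ k' ∈ univ.filter (fun k' => k' ∉ R k ∪ {k}), (d k' - 1))) := by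
  classical
  set S : Fin K → Finset (Fin N) := fun m => univ.filter (fun n => m ∈ M n) with hS
  have hScard : ∀ m, (S m).card = d m := fun m => (hd m).symm
  have hSne : ∀ m, (S m).Nonempty := fun m =>
    Finset.card_pos.1 (by rw [hScard]; exact hd1 m)
  have hmemS : ∀ m n, n ∈ S m ↔ m ∈ M n := by intro m n; simp [hS]
  have e : {A : Fin N → Matrix (Fin K) (Fin K) (ZMod 2) // Fits K N M R A} ≃
      ∀ k k' : Fin K, {v : Fin N → ZMod 2 //
        (∀ n, v n ≠ 0 → n ∈ S k') ∧
        (if k' = k then ∑ n, v n = 1 else if k' ∈ R k then True else ∑ n, v n = 0)} :=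
    { toFun := fun A k k' => ⟨fun n => A.1 n k k', by
        refine ⟨fun n hn => (hmemS k' n).2 (A.2.1 n k k' ((zmod2_ne_zero_iff _).1 hn)), ?_⟩
        split_ifs with h h'
        · subst h; simpa using A.2.2.1 k'
        · simpa using A.2.2.2 k k' h h'⟩
      invFun := fun F => ⟨fun n k k' => (F k k').1 n, by
        refine ⟨fun n k k' h1 => ?_, fun k => ?_, fun k k' hne hnR => ?_⟩
        · have h1' : (F k k').1 n = 1 := h1
          exact (hmemS k' n).1 ((F k k').2.1 n (by rw [h1']; exact one_ne_zero))
        · have := (F k k).2.2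
          simpa using this
        · have := (F k k').2.2
          rw [if_neg hne, if_neg hnR] at this
          exact this⟩
      left_inv := fun A => by apply Subtype.ext; rfl
      right_inv := fun F => by funext k k'; apply Subtype.ext; rfl }
  rw [Nat.card_congr e]
  simp only [Nat.card_pi]
  have hcard : ∀ k k' : Fin K,
      Nat.card {v : Fin N → ZMod 2 //
        (∀ n, v n ≠ 0 → n ∈ S k') ∧
        (if k' = k then ∑ n, v n = 1 else if k' ∈ R k then True else ∑ n, v n = 0)} =
      2 ^ (if k' = k then d k' - 1 else if k' ∈ R k then d k' else d k' - 1) := by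
    intro k k'
    by_cases h : k' = k
    · rw [if_pos h]
      calc Nat.card _
          = Nat.card {v : Fin N → ZMod 2 //
              (∀ n, v n ≠ 0 → n ∈ S k') ∧ ∑ n, v n = 1} :=
            Nat.card_congr (Equiv.subtypeEquivRight (fun v => by simp [h]))
        _ = 2 ^ ((S k').card - 1) := card_supp_sum _ (hSne k') 1
        _ = 2 ^ (d k' - 1) := by rw [hScard]
    · rw [if_neg h]
      by_cases h' : k' ∈ R k
      · rw [if_pos h']
        calc Nat.card _
            = Nat.card {v : Fin N → ZMod 2 // ∀ n, v n ≠ 0 → n ∈ S k'} :=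
              Nat.card_congr (Equiv.subtypeEquivRight (fun v => by simp [h, h']))
          _ = 2 ^ (S k').card := card_supp _
          _ = 2 ^ d k' := by rw [hScard]
      · rw [if_neg h']
        calc Nat.card _
            = Nat.card {v : Fin N → ZMod 2 //
                (∀ n, v n ≠ 0 → n ∈ S k') ∧ ∑ n, v n = 0} :=
              Nat.card_congr (Equiv.subtypeEquivRight (fun v => by simp [h, h']))
          _ = 2 ^ ((S k').card - 1) := card_supp_sum _ (hSne k') 0
          _ = 2 ^ (d k' - 1) := by rw [hScard]
  have hinner : ∀ k : Fin K,
      (∑ k' : Fin K, (if k' = k then d k' - 1 else if k' ∈ R k then d k' else d k' - 1)) =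
      (d k - 1) + (∑ k' ∈ R k, d k') +
        ∑ k' ∈ univ.filter (fun k' => k' ∉ R k ∪ {k}), (d k' - 1) := by
    intro k
    rw [← Finset.sum_filter_add_sum_filter_not univ (fun k' => k' ∈ R k ∪ {k})]
    have h1 : univ.filter (fun k' => k' ∈ R k ∪ {k}) = R k ∪ {k} := by ext x; simp
    have h2 : R k ∪ {k} = insert k (R k) := by
      rw [Finset.union_comm, ← Finset.insert_eq]
    congr 1
    · rw [h1, h2, Finset.sum_insert (hR k), if_pos rfl]
      congr 1
      apply Finset.sum_congr rfl
      intro k' hk'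
      have hne : k' ≠ k := fun h => hR k (h ▸ hk')
      rw [if_neg hne, if_pos hk']
    · apply Finset.sum_congr rfl
      intro k' hk'
      simp only [Finset.mem_filter, Finset.mem_union, Finset.mem_singleton] at hk'
      push_neg at hk'
      rw [if_neg hk'.2.2, if_neg hk'.2.1]
  calc ∏ k : Fin K, ∏ k' : Fin K, Nat.card {v : Fin N → ZMod 2 //
        (∀ n, v n ≠ 0 → n ∈ S k') ∧
        (if k' = k then ∑ n, v n = 1 else if k' ∈ R k then True else ∑ n, v n = 0)}
      = ∏ k : Fin K, ∏ k' : Fin K,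
          2 ^ (if k' = k then d k' - 1 else if k' ∈ R k then d k' else d k' - 1) := by
        exact Finset.prod_congr rfl fun k _ => Finset.prod_congr rfl fun k' _ => hcard k k'
    _ = ∏ k : Fin K, 2 ^ (∑ k' : Fin K,
          (if k' = k then d k' - 1 else if k' ∈ R k then d k' else d k' - 1)) := by
        exact Finset.prod_congr rfl fun k _ => Finset.prod_pow_eq_pow_sum _ _ _
    _ = 2 ^ (∑ k : Fin K, ∑ k' : Fin K,
          (if k' = k then d k' - 1 else if k' ∈ R k then d k' else d k' - 1)) :=
        Finset.prod_pow_eq_pow_sum _ _ _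
    _ = _ := by rw [Finset.sum_congr rfl fun k _ => hinner k]
end
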